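/- Define the resultant speed on the planar slippery cross slope by V(θ) = √(X(θ)² + Y(θ)²) where X(θ) = (1 - η̃G cos θ) cos θ + G, Y(θ) = (1 - η̃G cos θ) sin θ, with G = 0.49. Then V(θ)² = (1 - η̃G cos θ)² + 2G cos θ(1 - η̃G cos θ) + G², and for η̃ ∈ [0,1] the derivative of V² with respect to θ vanishes at interior critical points cos θ = 100(η̃-1)/(η̃(49η̃ - 98)) whenever this value lies in [-1, 1], which happens precisely for η̃ ≥ (99 - 13√29)/49. -/

import Mathlib

/-- resultant speed on the planar slippery cross slope with G = 0.49:
the formula for V², and the interior critical points of V², which exist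
precisely for η̃ ≥ (99 - 13√29)/49. -/
theorem stmt_14 (η : ℝ) (hη : η ∈ Set.Icc (0:ℝ) 1) (G : ℝ) (hG : G = 0.49) :
    -- V(θ)² = (1 - η̃G cos θ)² + 2G cos θ (1 - η̃G cos θ) + G²
    (∀ θ : ℝ,
      ((1 - η*G*Real.cos θ) * Real.cos θ + G)^2
        + ((1 - η*G*Real.cos θ) * Real.sin θ)^2
      = (1 - η*G*Real.cos θ)^2 + 2*G*Real.cos θ*(1 - η*G*Real.cos θ) + G^2) ∧
    -- the derivative of V² vanishes at the interior critical points
    -- cos θ = 100(η-1)/(η(49η - 98))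
    (∀ θ : ℝ, η * (49*η - 98) * Real.cos θ = 100 * (η - 1) →
      deriv (fun t : ℝ =>
        ((1 - η*G*Real.cos t) * Real.cos t + G)^2
          + ((1 - η*G*Real.cos t) * Real.sin t)^2) θ = 0) ∧
    -- such a critical value lies in [-1, 1] precisely for η ≥ (99 - 13√29)/49
    ((∃ x ∈ Set.Icc (-1:ℝ) 1, η * (49*η - 98) * x = 100 * (η - 1)) ↔
      (99 - 13 * Real.sqrt 29) / 49 ≤ η) := by
  obtain ⟨hη0, hη1⟩ := hη
  subst hG
  have hs29 : Real.sqrt 29 ^ 2 = 29 := Real.sq_sqrt (by norm_num)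
  have hs29pos : (0:ℝ) ≤ Real.sqrt 29 := Real.sqrt_nonneg 29
  refine ⟨?_, ?_, ?_⟩
  · intro θ
    have hpy := Real.sin_sq_add_cos_sq θ
    nlinarith [hpy]
  · intro θ hcrit
    have hc := Real.hasDerivAt_cos θ
    have hs := Real.hasDerivAt_sin θ
    have h1 : HasDerivAt (fun t : ℝ => 1 - η*(0.49:ℝ)*Real.cos t)
        (η*(0.49:ℝ)*Real.sin θ) θ := by
      have := (hc.const_mul (η*(0.49:ℝ))).const_sub 1
      rw [show η*(0.49:ℝ)*Real.sin θ = -(η*(0.49:ℝ)*-Real.sin θ) by ring]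
      exact this
    have h2 : HasDerivAt (fun t : ℝ => (1 - η*(0.49:ℝ)*Real.cos t) * Real.cos t + (0.49:ℝ))
        (η*(0.49:ℝ)*Real.sin θ * Real.cos θ + (1 - η*(0.49:ℝ)*Real.cos θ) * (-Real.sin θ)) θ :=
      (h1.mul hc).add_const _
    have h4 : HasDerivAt (fun t : ℝ => (1 - η*(0.49:ℝ)*Real.cos t) * Real.sin t)
        (η*(0.49:ℝ)*Real.sin θ * Real.sin θ + (1 - η*(0.49:ℝ)*Real.cos θ) * Real.cos θ) θ :=
      h1.mul hs
    have htot := (h2.pow 2).add (h4.pow 2)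
    rw [show deriv (fun t : ℝ => ((1 - η*(0.49:ℝ)*Real.cos t) * Real.cos t + (0.49:ℝ))^2
        + ((1 - η*(0.49:ℝ)*Real.cos t) * Real.sin t)^2) θ = _ from htot.deriv]
    have hpy := Real.sin_sq_add_cos_sq θ
    push_cast
    linear_combination (-(49:ℝ)/5000) * Real.sin θ * hcrit
      + (49/50)*η*(1 - (49/100)*η*Real.cos θ)*Real.sin θ * hpy
  · constructor
    · rintro ⟨x, ⟨hx1, hx2⟩, hx⟩
      have hne : (0:ℝ) ≤ η*(98-49*η) := mul_nonneg hη0 (by linarith)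
      have hp : (0:ℝ) ≤ (1-x)*(η*(98-49*η)) := mul_nonneg (by linarith) hne
      have hquad : 49*η^2 - 198*η + 100 ≤ 0 := by nlinarith [hx, hp]
      rw [div_le_iff₀ (by norm_num : (0:ℝ) < 49)]
      nlinarith [hs29, hs29pos, sq_nonneg (13*Real.sqrt 29 - (99 - 49*η))]
    · intro h
      have h' : 99 - 13 * Real.sqrt 29 ≤ 49 * η := by
        rw [div_le_iff₀ (by norm_num : (0:ℝ) < 49)] at h; linarith
      have hquad : 49*η^2 - 198*η + 100 ≤ 0 := by
        nlinarith [hs29, hs29pos, sq_nonneg (99 - 49*η)]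
      have hηpos : 0 < η := by nlinarith
      have hd : η * (49*η - 98) < 0 := by nlinarith
      refine ⟨100*(η-1)/(η*(49*η-98)), ⟨?_, ?_⟩, ?_⟩
      · rw [le_div_iff_of_neg hd]
        nlinarith
      · rw [div_le_one_iff]
        exact Or.inr (Or.inr ⟨hd, by nlinarith⟩)
      · rw [mul_comm, div_mul_cancel₀ _ (ne_of_lt hd)]
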